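/- In the 1-dimensional VAS with actions {−1, 0, 2}, for all k, k', m ∈ ℕ: k →_w k' for the word w = (−1)^m · 0 · 2^m (m copies of −1, then 0, then m copies of 2, with all intermediate configurations in ℕ) if and only if m ≤ k and k' = k + m. Consequently, {k' | ∃ m, k →_{(−1)^m 0 2^m} k'} = {k' | k ≤ k' ≤ 2k}. -/
import Mathlib


/-- A run of a 1-dimensional VAS along a word of actions in ℤ:
all intermediate configurations must be natural numbers. -/
def Run1 : List ℤ → ℕ → ℕ → Prop
  | [], x, y => x = y
  | a :: w, x, y => ∃ z : ℕ, (z : ℤ) = (x : ℤ) + a ∧ Run1 w z y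

lemma Run1_append (w1 w2 : List ℤ) (x y : ℕ) :
    Run1 (w1 ++ w2) x y ↔ ∃ z, Run1 w1 x z ∧ Run1 w2 z y := by
  induction w1 generalizing x with
  | nil => simp [Run1]
  | cons a w ih =>
    simp only [List.cons_append, Run1]
    constructor
    · rintro ⟨z, hz, h⟩
      obtain ⟨u, h1, h2⟩ := (ih z).mp h
      exact ⟨u, ⟨z, hz, h1⟩, h2⟩
    · rintro ⟨u, ⟨z, hz, h1⟩, h2⟩
      exact ⟨z, hz, (ih z).mpr ⟨u, h1, h2⟩⟩

lemma Run1_neg (m : ℕ) (x y : ℕ) :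
    Run1 (List.replicate m (-1)) x y ↔ m ≤ x ∧ y = x - m := by
  induction m generalizing x with
  | zero => simp [Run1, eq_comm]
  | succ n ih =>
    simp only [List.replicate_succ, Run1, ih]
    constructor
    · rintro ⟨z, hz, hn, rfl⟩
      have hzx : z = x - 1 := by omega
      omega
    · rintro ⟨h1, rfl⟩
      refine ⟨x - 1, by omega, by omega, by omega⟩

lemma Run1_two (m : ℕ) (x y : ℕ) :
    Run1 (List.replicate m 2) x y ↔ y = x + 2 * m := by
  induction m generalizing x with
  | zero => simp [Run1, eq_comm]
  | succ n ih =>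
    simp only [List.replicate_succ, Run1, ih]
    constructor
    · rintro ⟨z, hz, rfl⟩; omega
    · rintro rfl; exact ⟨x + 2, by push_cast; ring, by omega⟩

theorem stmt_13 :
    (∀ k k' m : ℕ,
      Run1 (List.replicate m (-1) ++ [0] ++ List.replicate m 2) k k' ↔
        m ≤ k ∧ k' = k + m) ∧
    (∀ k : ℕ,
      {k' : ℕ | ∃ m : ℕ,
        Run1 (List.replicate m (-1) ++ [0] ++ List.replicate m 2) k k'} =
      {k' : ℕ | k ≤ k' ∧ k' ≤ 2 * k}) := by
  have key : ∀ k k' m : ℕ,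
      Run1 (List.replicate m (-1) ++ [0] ++ List.replicate m 2) k k' ↔
        m ≤ k ∧ k' = k + m := by
    intro k k' m
    simp only [Run1_append, Run1_neg, Run1, Run1_two]
    constructor
    · rintro ⟨z, ⟨u, ⟨hm, rfl⟩, v, hv, rfl⟩, rfl⟩
      omega
    · rintro ⟨hm, rfl⟩
      refine ⟨k - m, ⟨k - m, ⟨hm, rfl⟩, k - m, by omega, rfl⟩, by omega⟩
  refine ⟨key, fun k => ?_⟩
  ext k'
  simp only [Set.mem_setOf_eq, key]
  constructor
  · rintro ⟨m, hm, rfl⟩; omega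
  · rintro ⟨h1, h2⟩; exact ⟨k' - k, by omega, by omega⟩
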